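/- Let M : ℕ^d → ℂ^{n×n} be a 2-multiplicative function, i.e., M(2m_1+ε_1, …, 2m_d+ε_d) = M_{ε_1,…,ε_d} · M(m_1,…,m_d) for fixed matrices M_{ε_1,…,ε_d} indexed by (ε_1,…,ε_d) ∈ {0,1}^d, with M(0,…,0) = I. For C ⊆ {1,…,d} define G_C(N) = Σ M(m_1,…,m_d) over all tuples with m_i < N for i ∉ C and m_i = N for i ∈ C. Then G_C(2N) = B_{C,∅} G_C(N) and G_C(2N+1) = Σ_{D ⊆ C^c} B_{D,C} G_{C∪D}(N), where B_{C,D} = Σ M_{ε_1,…,ε_d} over all (ε_1,…,ε_d) ∈ {0,1}^d with ε_i = 0 for i ∈ C and ε_i = 1 for i ∈ D. -/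

import Mathlib

open Finset

/-- Recursion formulas for the partial-sum matrix functions `G_C` of a
2-multiplicative matrix-valued function. -/
theorem two_multiplicative_recursion (d n : ℕ) (hd : 1 ≤ d) (hn : 1 ≤ n)
    (M : (Fin d → ℕ) → Matrix (Fin n) (Fin n) ℂ)
    (Mdig : (Fin d → Fin 2) → Matrix (Fin n) (Fin n) ℂ)
    (hmult : ∀ (m : Fin d → ℕ) (ε : Fin d → Fin 2),
      M (fun i => 2 * m i + (ε i : ℕ)) = Mdig ε * M m)
    (hM0 : M (fun _ => 0) = 1)
    (G : Finset (Fin d) → ℕ → Matrix (Fin n) (Fin n) ℂ)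
    (hG : ∀ (C : Finset (Fin d)) (N : ℕ),
      G C N = ∑ m ∈ (Fintype.piFinset fun _ : Fin d => Finset.range (N + 1)).filter
          (fun m => ∀ i : Fin d, if i ∈ C then m i = N else m i < N), M m)
    (B : Finset (Fin d) → Finset (Fin d) → Matrix (Fin n) (Fin n) ℂ)
    (hB : ∀ C D : Finset (Fin d),
      B C D = ∑ ε ∈ Finset.univ.filter
          (fun ε : Fin d → Fin 2 => (∀ i ∈ C, ε i = 0) ∧ (∀ i ∈ D, ε i = 1)),
        Mdig ε)
    (C : Finset (Fin d)) (N : ℕ) (hN : 1 ≤ N) :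
    G C (2 * N) = B C ∅ * G C N ∧
    G C (2 * N + 1) = ∑ D ∈ Cᶜ.powerset, B D C * G (C ∪ D) N := by
  constructor
  · rw [hG C (2 * N), hG C N, hB C ∅, Finset.sum_mul_sum, ← Finset.sum_product']
    refine Finset.sum_nbij'
      (i := fun m => ((fun k => (⟨m k % 2, by omega⟩ : Fin 2)), fun k => m k / 2))
      (j := fun p => fun k => 2 * p.2 k + (p.1 k : ℕ)) ?_ ?_ ?_ ?_ ?_
    · intro m hm
      simp only [Finset.mem_filter, Fintype.mem_piFinset, Finset.mem_range] at hm
      obtain ⟨hm1, hm2⟩ := hm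
      simp only [Finset.mem_product, Finset.mem_filter, Finset.mem_univ, true_and,
        Fintype.mem_piFinset, Finset.mem_range]
      refine ⟨⟨fun i hi => ?_, fun i hi => absurd hi (Finset.notMem_empty i)⟩,
        fun i => ?_, fun i => ?_⟩
      · have := hm2 i
        rw [if_pos hi] at this
        exact Fin.ext (by simp; omega)
      · have := hm1 i
        omega
      · have := hm2 i
        by_cases hi : i ∈ C
        · rw [if_pos hi] at this
          rw [if_pos hi]
          omega
        · rw [if_neg hi] at this
          rw [if_neg hi]
          omega
    · intro p hp
      simp only [Finset.mem_product, Finset.mem_filter, Finset.mem_univ, true_and,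
        Fintype.mem_piFinset, Finset.mem_range] at hp
      obtain ⟨⟨hε, -⟩, hq1, hq2⟩ := hp
      simp only [Finset.mem_filter, Fintype.mem_piFinset, Finset.mem_range]
      have hlt : ∀ k, (p.1 k : ℕ) < 2 := fun k => (p.1 k).isLt
      have key : ∀ i, if i ∈ C then 2 * p.2 i + (p.1 i : ℕ) = 2 * N
          else 2 * p.2 i + (p.1 i : ℕ) < 2 * N := by
        intro i
        have hq := hq2 i
        have h2 := hlt i
        by_cases hi : i ∈ C
        · rw [if_pos hi] at hq ⊢
          have h0 : (p.1 i : ℕ) = 0 := by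
            have := hε i hi
            rw [this]; rfl
          omega
        · rw [if_neg hi] at hq ⊢
          omega
      refine ⟨fun i => ?_, key⟩
      have := key i
      by_cases hi : i ∈ C
      · rw [if_pos hi] at this; omega
      · rw [if_neg hi] at this; omega
    · intro m hm
      funext k
      show 2 * (m k / 2) + m k % 2 = m k
      omega
    · intro p hp
      have hlt : ∀ k, (p.1 k : ℕ) < 2 := fun k => (p.1 k).isLt
      refine Prod.ext ?_ ?_
      · funext k
        exact Fin.ext (by show (2 * p.2 k + (p.1 k : ℕ)) % 2 = _; have := hlt k; omega)
      · funext k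
        show (2 * p.2 k + (p.1 k : ℕ)) / 2 = p.2 k
        have := hlt k
        omega
    · intro m hm
      have hm' : m = fun i => 2 * (m i / 2) + (((⟨m i % 2, by omega⟩ : Fin 2) : ℕ)) :=
        funext fun k => by show m k = 2 * (m k / 2) + m k % 2; omega
      conv_lhs => rw [hm']
      exact hmult _ _
  · rw [hG C (2 * N + 1)]
    have hR : ∀ D : Finset (Fin d), D ∈ Cᶜ.powerset → B D C * G (C ∪ D) N =
        ∑ p ∈ (Finset.univ.filter (fun ε : Fin d → Fin 2 =>
            (∀ i ∈ D, ε i = 0) ∧ (∀ i ∈ C, ε i = 1))) ×ˢ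
          ((Fintype.piFinset fun _ : Fin d => Finset.range (N + 1)).filter
            (fun q => ∀ i : Fin d, if i ∈ C ∪ D then q i = N else q i < N)),
          Mdig p.1 * M p.2 := by
      intro D hD
      rw [hB D C, hG (C ∪ D) N, Finset.sum_mul_sum, ← Finset.sum_product']
    rw [Finset.sum_congr rfl hR, Finset.sum_sigma']
    refine Finset.sum_nbij'
      (i := fun m => ⟨Cᶜ.filter (fun i => m i = 2 * N),
        ((fun k => (⟨m k % 2, by omega⟩ : Fin 2)), fun k => m k / 2)⟩)
      (j := fun x => fun k => 2 * x.2.2 k + (x.2.1 k : ℕ)) ?_ ?_ ?_ ?_ ?_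
    · intro m hm
      simp only [Finset.mem_filter, Fintype.mem_piFinset, Finset.mem_range] at hm
      obtain ⟨hm1, hm2⟩ := hm
      simp only [Finset.mem_sigma, Finset.mem_powerset, Finset.mem_product, Finset.mem_filter,
        Finset.mem_univ, true_and, Fintype.mem_piFinset, Finset.mem_range]
      refine ⟨Finset.filter_subset _ _, ⟨fun i hi => ?_, fun i hi => ?_⟩,
        fun i => by have := hm1 i; omega, fun i => ?_⟩
      · simp only [Finset.mem_filter, Finset.mem_compl] at hi
        exact Fin.ext (by simp; omega)
      · have := hm2 i
        rw [if_pos hi] at this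
        exact Fin.ext (by simp; omega)
      · have h1 := hm1 i
        have h2 := hm2 i
        by_cases hi : i ∈ C
        · rw [if_pos hi] at h2
          rw [if_pos (Finset.mem_union_left _ hi)]
          omega
        · rw [if_neg hi] at h2
          by_cases hi2 : m i = 2 * N
          · rw [if_pos (Finset.mem_union_right _ (by
              simp [Finset.mem_filter, Finset.mem_compl, hi, hi2]))]
            omega
          · rw [if_neg (by
              simp only [Finset.mem_union, Finset.mem_filter, Finset.mem_compl]
              push_neg
              exact ⟨hi, fun _ => hi2⟩)]
            omega
    · intro x hx
      simp only [Finset.mem_sigma, Finset.mem_powerset, Finset.mem_product, Finset.mem_filter,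
        Finset.mem_univ, true_and, Fintype.mem_piFinset, Finset.mem_range] at hx
      obtain ⟨hD, ⟨hε0, hε1⟩, hq1, hq2⟩ := hx
      simp only [Finset.mem_filter, Fintype.mem_piFinset, Finset.mem_range]
      have hlt : ∀ k, (x.2.1 k : ℕ) < 2 := fun k => (x.2.1 k).isLt
      refine ⟨fun i => by have := hq1 i; have := hlt i; omega, fun i => ?_⟩
      have hq := hq2 i
      by_cases hi : i ∈ C
      · rw [if_pos hi]
        rw [if_pos (Finset.mem_union_left _ hi)] at hq
        have h1 : (x.2.1 i : ℕ) = 1 := by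
          have := hε1 i hi
          simpa [Fin.ext_iff] using this
        omega
      · rw [if_neg hi]
        by_cases hi2 : i ∈ x.1
        · rw [if_pos (Finset.mem_union_right _ hi2)] at hq
          have h0 : (x.2.1 i : ℕ) = 0 := by
            have := hε0 i hi2
            rw [this]; rfl
          omega
        · rw [if_neg (by simp [Finset.mem_union, hi, hi2])] at hq
          have := hlt i
          omega
    · intro m hm
      funext k
      show 2 * (m k / 2) + m k % 2 = m k
      omega
    · intro x hx
      simp only [Finset.mem_sigma, Finset.mem_powerset, Finset.mem_product, Finset.mem_filter,
        Finset.mem_univ, true_and, Fintype.mem_piFinset, Finset.mem_range] at hx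
      obtain ⟨hD, ⟨hε0, hε1⟩, hq1, hq2⟩ := hx
      have hlt : ∀ k, (x.2.1 k : ℕ) < 2 := fun k => (x.2.1 k).isLt
      refine Sigma.ext ?_ (heq_of_eq (Prod.ext ?_ ?_))
      · ext k
        simp only [Finset.mem_filter, Finset.mem_compl]
        constructor
        · rintro ⟨hk, hk2⟩
          by_contra hk3
          have hq := hq2 k
          rw [if_neg (by simp [Finset.mem_union, hk, hk3])] at hq
          have := hlt k
          omega
        · intro hk
          have hkC : k ∉ C := by
            have := hD hk
            simpa [Finset.mem_compl] using this
          have hq := hq2 k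
          rw [if_pos (Finset.mem_union_right _ hk)] at hq
          have h0 : (x.2.1 k : ℕ) = 0 := by
            have := hε0 k hk
            rw [this]; rfl
          exact ⟨hkC, by omega⟩
      · funext k
        exact Fin.ext (by show (2 * x.2.2 k + (x.2.1 k : ℕ)) % 2 = _; have := hlt k; omega)
      · funext k
        show (2 * x.2.2 k + (x.2.1 k : ℕ)) / 2 = x.2.2 k
        have := hlt k
        omega
    · intro m hm
      have hm' : m = fun i => 2 * (m i / 2) + (((⟨m i % 2, by omega⟩ : Fin 2) : ℕ)) :=
        funext fun k => by show m k = 2 * (m k / 2) + m k % 2; omega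
      conv_lhs => rw [hm']
      exact hmult _ _
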